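/- Let G be the graph product of a finite simple graph Γ = (V,E) with vertex groups (G_v)_{v∈V}. For every subset A ⊆ V, the canonical homomorphism from the graph product of the induced subgraph Γ_A with vertex groups (G_a)_{a∈A} to G is injective, and its image is the subgroup G(A) of G generated by the images of the G_a with a ∈ A. In other words, G(A) is itself a graph product of (Γ_A, G_a). -/

import Mathlib

open Monoid

/-- The set of commutator relators defining a graph product. -/
def graphProdRels {V : Type*} (Γ : SimpleGraph V) (G : V → Type*) [∀ v, Group (G v)] :
    Set (CoprodI G) :=
  {x | ∃ (u v : V) (_ : Γ.Adj u v) (g : G u) (h : G v),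
    x = (CoprodI.of g)⁻¹ * (CoprodI.of h)⁻¹ * CoprodI.of g * CoprodI.of h}

/-- The graph product of the graph of groups `(Γ, G)`: the quotient of the free product of the
vertex groups by the normal closure of the commutators of elements of pairs of adjacent vertex
groups. -/
def GraphProduct {V : Type*} (Γ : SimpleGraph V) (G : V → Type*) [∀ v, Group (G v)] : Type _ :=
  CoprodI G ⧸ Subgroup.normalClosure (graphProdRels Γ G)

instance {V : Type*} (Γ : SimpleGraph V) (G : V → Type*) [∀ v, Group (G v)] :
    Group (GraphProduct Γ G) :=
  QuotientGroup.Quotient.group _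

/-- The canonical map from a vertex group into the graph product. -/
def GraphProduct.of {V : Type*} (Γ : SimpleGraph V) (G : V → Type*) [∀ v, Group (G v)] (v : V) :
    G v →* GraphProduct Γ G :=
  (QuotientGroup.mk' _).comp CoprodI.of

/-- `G(A)`: the subgroup of the graph product generated by the images of the vertex groups
`G_a`, `a ∈ A`. -/
def GraphProduct.vsub {V : Type*} (Γ : SimpleGraph V) (G : V → Type*) [∀ v, Group (G v)]
    (A : Set V) : Subgroup (GraphProduct Γ G) :=
  ⨆ a ∈ A, (GraphProduct.of Γ G a).range

theorem GraphProduct.of_commute {V : Type*} (Γ : SimpleGraph V) (G : V → Type*)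
    [∀ v, Group (G v)] {u v : V} (huv : Γ.Adj u v) (g : G u) (h : G v) :
    Commute (GraphProduct.of Γ G u g) (GraphProduct.of Γ G v h) := by
  have hmem : (CoprodI.of g)⁻¹ * (CoprodI.of h)⁻¹ * CoprodI.of g * CoprodI.of h ∈
      Subgroup.normalClosure (graphProdRels Γ G) :=
    Subgroup.subset_normalClosure ⟨u, v, huv, g, h, rfl⟩
  have h1 : ((GraphProduct.of Γ G u g)⁻¹ * (GraphProduct.of Γ G v h)⁻¹ *
      GraphProduct.of Γ G u g * GraphProduct.of Γ G v h) = 1 := by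
    have := (QuotientGroup.eq_one_iff
      ((CoprodI.of g)⁻¹ * (CoprodI.of h)⁻¹ * CoprodI.of g * CoprodI.of h)).2 hmem
    exact this
  show GraphProduct.of Γ G u g * GraphProduct.of Γ G v h =
    GraphProduct.of Γ G v h * GraphProduct.of Γ G u g
  calc GraphProduct.of Γ G u g * GraphProduct.of Γ G v h
      = GraphProduct.of Γ G v h * GraphProduct.of Γ G u g *
        ((GraphProduct.of Γ G u g)⁻¹ * (GraphProduct.of Γ G v h)⁻¹ *
          GraphProduct.of Γ G u g * GraphProduct.of Γ G v h) := by group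
    _ = GraphProduct.of Γ G v h * GraphProduct.of Γ G u g := by rw [h1, mul_one]

/-- The universal property of the graph product: a family of homomorphisms on the vertex groups
whose images commute along edges induces a homomorphism on the graph product. -/
def GraphProduct.lift {V : Type*} (Γ : SimpleGraph V) (G : V → Type*) [∀ v, Group (G v)]
    {H : Type*} [Group H] (f : ∀ v, G v →* H)
    (hf : ∀ u v, Γ.Adj u v → ∀ (g : G u) (h : G v), Commute (f u g) (f v h)) :
    GraphProduct Γ G →* H :=
  QuotientGroup.lift _ (CoprodI.lift f) (by
    intro x hx
    refine Subgroup.normalClosure_le_normal ?_ hx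
    rintro y ⟨u, v, huv, g, h, rfl⟩
    have hc := ((hf u v huv g h).inv_inv).commutator_eq
    simp only [commutatorElement_def, inv_inv] at hc
    simp only [SetLike.mem_coe, MonoidHom.mem_ker, map_mul, map_inv, CoprodI.lift_of]
    exact hc)

theorem GraphProduct.lift_of {V : Type*} (Γ : SimpleGraph V) (G : V → Type*) [∀ v, Group (G v)]
    {H : Type*} [Group H] (f : ∀ v, G v →* H)
    (hf : ∀ u v, Γ.Adj u v → ∀ (g : G u) (h : G v), Commute (f u g) (f v h))
    (v : V) (g : G v) :
    GraphProduct.lift Γ G f hf (GraphProduct.of Γ G v g) = f v g := by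
  show QuotientGroup.lift _ (CoprodI.lift f) _ (QuotientGroup.mk (CoprodI.of g)) = f v g
  rw [QuotientGroup.lift_mk]
  simp

/-- The canonical homomorphism from the graph product of the induced subgraph `Γ_A` with vertex
groups `(G_a)_{a ∈ A}` to the graph product of `(Γ, G)`. -/
def GraphProduct.inclusion {V : Type*} (Γ : SimpleGraph V) (G : V → Type*) [∀ v, Group (G v)]
    (A : Set V) : GraphProduct (Γ.induce A) (fun a : A => G a) →* GraphProduct Γ G :=
  GraphProduct.lift (Γ.induce A) (fun a : A => G a) (fun a : A => GraphProduct.of Γ G a)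
    (fun a b hab g h => GraphProduct.of_commute Γ G hab g h)

theorem GraphProduct.hom_ext {V : Type*} {Γ : SimpleGraph V} {G : V → Type*} [∀ v, Group (G v)]
    {H : Type*} [Group H] {f g : GraphProduct Γ G →* H}
    (h : ∀ v x, f (GraphProduct.of Γ G v x) = g (GraphProduct.of Γ G v x)) : f = g := by
  have key : f.comp (QuotientGroup.mk' _) = g.comp (QuotientGroup.mk' _) :=
    CoprodI.ext_hom _ _ fun i => MonoidHom.ext fun x => h i x
  ext y
  obtain ⟨x, rfl⟩ := QuotientGroup.mk'_surjective (Subgroup.normalClosure (graphProdRels Γ G)) y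
  exact DFunLike.congr_fun key x

theorem GraphProduct.iSup_range_eq_top {V : Type*} (Γ : SimpleGraph V) (G : V → Type*)
    [∀ v, Group (G v)] : (⨆ v, (GraphProduct.of Γ G v).range) = ⊤ := by
  rw [eq_top_iff]
  intro y _
  obtain ⟨x, rfl⟩ := QuotientGroup.mk'_surjective (Subgroup.normalClosure (graphProdRels Γ G)) y
  induction x using CoprodI.induction_on with
  | one => exact Subgroup.one_mem _
  | of i x =>
    exact Subgroup.mem_iSup_of_mem i ⟨x, rfl⟩
  | mul x y hx hy =>
    rw [map_mul]
    exact Subgroup.mul_mem _ (hx (Subgroup.mem_top _)) (hy (Subgroup.mem_top _))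

theorem GraphProduct.inclusion_of {V : Type*} (Γ : SimpleGraph V) (G : V → Type*)
    [∀ v, Group (G v)] (A : Set V) (a : A) (x : G a) :
    GraphProduct.inclusion Γ G A (GraphProduct.of (Γ.induce A) (fun a : A => G a) a x)
      = GraphProduct.of Γ G a x := by
  unfold GraphProduct.inclusion
  exact GraphProduct.lift_of (Γ.induce A) (fun a : A => G a) (fun a : A => GraphProduct.of Γ G a)
    (fun a b hab g h => GraphProduct.of_commute Γ G hab g h) a x

/-- For every `A ⊆ V`, the canonical homomorphism from the graph product of
`(Γ_A, G_a)` to the graph product `G` of `(Γ, G_v)` is injective, with image the subgroup `G(A)`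
generated by the images of the `G_a`, `a ∈ A`. -/
theorem graphProduct_induced_subgraph {V : Type*} [Fintype V] (Γ : SimpleGraph V)
    (G : V → Type*) [∀ v, Group (G v)] (A : Set V) :
    Function.Injective (GraphProduct.inclusion Γ G A) ∧
      (GraphProduct.inclusion Γ G A).range = GraphProduct.vsub Γ G A := by
  classical
  -- the retraction
  set r : GraphProduct Γ G →* GraphProduct (Γ.induce A) (fun a : A => G a) :=
    GraphProduct.lift Γ G
      (fun v => if h : v ∈ A then GraphProduct.of (Γ.induce A) (fun a : A => G a) ⟨v, h⟩ else 1)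
      (by
        intro u v huv g h
        by_cases hu : u ∈ A
        · by_cases hv : v ∈ A
          · simp only [dif_pos hu, dif_pos hv]
            exact GraphProduct.of_commute (Γ.induce A) (fun a : A => G a)
              (by simpa using huv : (Γ.induce A).Adj ⟨u, hu⟩ ⟨v, hv⟩) g h
          · simp only [dif_neg hv, MonoidHom.one_apply]
            exact Commute.one_right _
        · simp only [dif_neg hu, MonoidHom.one_apply]
          exact Commute.one_left _) with hr
  have hretr : r.comp (GraphProduct.inclusion Γ G A) = MonoidHom.id _ := by
    apply GraphProduct.hom_ext
    intro a x
    show r (GraphProduct.inclusion Γ G A (GraphProduct.of _ _ a x)) = GraphProduct.of _ _ a x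
    rw [GraphProduct.inclusion_of, hr, GraphProduct.lift_of]
    simp only [dif_pos a.2]
  constructor
  · intro x y hxy
    have := congrArg r hxy
    calc x = r.comp (GraphProduct.inclusion Γ G A) x := by rw [hretr]; rfl
    _ = r.comp (GraphProduct.inclusion Γ G A) y := this
    _ = y := by rw [hretr]; rfl
  · have h1 : (GraphProduct.inclusion Γ G A).range
        = Subgroup.map (GraphProduct.inclusion Γ G A) ⊤ := MonoidHom.range_eq_map _
    rw [h1, ← GraphProduct.iSup_range_eq_top (Γ.induce A) (fun a : A => G a),
      Subgroup.map_iSup]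
    rw [GraphProduct.vsub, iSup_subtype']
    congr 1
    funext a
    ext x
    simp only [Subgroup.mem_map, MonoidHom.mem_range]
    constructor
    · rintro ⟨-, ⟨g, rfl⟩, rfl⟩
      exact ⟨g, (GraphProduct.inclusion_of Γ G A a g).symm⟩
    · rintro ⟨g, rfl⟩
      exact ⟨_, ⟨g, rfl⟩, GraphProduct.inclusion_of Γ G A a g⟩
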